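/- arXiv:1212.2399 — 3 statements merged into one kernel-verified Lean document; each statement's English description precedes it below -/
import Mathlib

section
/- For the East model on Λ = {1,…,L} with q ∈ (0,1/2), the survival function of the hitting time τ_L started from 𝟙0 is sub-multiplicative: for all s,t ≥ 0, P_{𝟙0}(τ_L > t+s) ≤ P_{𝟙0}(τ_L > t)·P_{𝟙0}(τ_L > s). The same sub-multiplicativity holds for the hitting time τ̂_L of {σ : σ_L = 0} started from the all-ones configuration 𝟙: P_𝟙(τ̂_L > t+s) ≤ P_𝟙(τ̂_L > t)·P_𝟙(τ̂_L > s). -/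
open Filter Topology MeasureTheory

namespace East

/-- Configurations of the East model on `Λ = {1,…,L}`: `true` = particle (1),
`false` = vacancy (0).  The index `x : Fin L` corresponds to the site `x.val + 1`. -/
abbrev Cfg (L : ℕ) := Fin L → Bool

noncomputable section

/-- Weight of a configuration under the product Bernoulli(1−q) measure π. -/
def weight (L : ℕ) (q : ℝ) (σ : Cfg L) : ℝ :=
  ∏ x : Fin L, (if σ x then (1 - q) else q)

/-- Mean of `f` under π. -/
def mean (L : ℕ) (q : ℝ) (f : Cfg L → ℝ) : ℝ :=
  ∑ σ : Cfg L, weight L q σ * f σ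

/-- π-measure of a set of configurations. -/
def measSet (L : ℕ) (q : ℝ) (A : Set (Cfg L)) : ℝ :=
  ∑ σ : Cfg L, Set.indicator A (weight L q) σ

/-- The East constraint at `x`, as a 0/1 real number: the leftmost site is unconstrained,
and any other site is free iff its left neighbour is a vacancy. -/
def cR (L : ℕ) (σ : Cfg L) (x : Fin L) : ℝ :=
  if x.val = 0 then 1
  else if σ ⟨x.val - 1, lt_of_le_of_lt (Nat.sub_le _ _) x.isLt⟩ = false then 1 else 0

/-- The East constraint at `x`, as a proposition. -/
def constraintP (L : ℕ) (σ : Cfg L) (x : Fin L) : Prop :=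
  x.val = 0 ∨ σ ⟨x.val - 1, lt_of_le_of_lt (Nat.sub_le _ _) x.isLt⟩ = false

/-- Flip the spin at `x`. -/
def flip (L : ℕ) (σ : Cfg L) (x : Fin L) : Cfg L :=
  Function.update σ x (!(σ x))

/-- Local mean `π_x f`. -/
def locMean (L : ℕ) (q : ℝ) (f : Cfg L → ℝ) (σ : Cfg L) (x : Fin L) : ℝ :=
  (1 - q) * f (Function.update σ x true) + q * f (Function.update σ x false)

/-- The East generator `𝓛 f (σ) = Σ_x c_x(σ) (π_x f (σ) − f σ)`. -/
def gen (L : ℕ) (q : ℝ) (f : Cfg L → ℝ) (σ : Cfg L) : ℝ :=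
  ∑ x : Fin L, cR L σ x * (locMean L q f σ x - f σ)

/-- Dirichlet form `𝓓(f) = π(f ⬝ (−𝓛f))`. -/
def dirichlet (L : ℕ) (q : ℝ) (f : Cfg L → ℝ) : ℝ :=
  mean L q (fun σ => f σ * (-(gen L q f σ)))

/-- Variance under π. -/
def variance (L : ℕ) (q : ℝ) (f : Cfg L → ℝ) : ℝ :=
  mean L q (fun σ => f σ ^ 2) - (mean L q f) ^ 2

/-- Spectral gap: `inf {𝓓(f)/Var(f) : f non-constant}`. -/
def gap (L : ℕ) (q : ℝ) : ℝ :=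
  sInf {r : ℝ | ∃ f : Cfg L → ℝ, (¬ ∀ σ τ : Cfg L, f σ = f τ) ∧
    r = dirichlet L q f / variance L q f}

/-- Relaxation time `T_rel(L) = 1 / gap(L)`. -/
def Trel (L : ℕ) (q : ℝ) : ℝ := 1 / gap L q

/-- Jump rate of the move at `x` from `σ`: the constraint times `q` (killing a particle
costs `q`… i.e. a particle flips to a vacancy at rate `q`) or `p = 1−q`. -/
def rate (L : ℕ) (q : ℝ) (σ : Cfg L) (x : Fin L) : ℝ :=
  cR L σ x * (if σ x then q else (1 - q))

/-- The East Markov rate matrix `K`, with off-diagonal entries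
`K(σ,σ^x) = c_x(σ)(q·σ_x + p(1−σ_x))` and zero row sums. -/
def K (L : ℕ) (q : ℝ) : Matrix (Cfg L) (Cfg L) ℝ := fun σ η =>
  (∑ x : Fin L, if η = flip L σ x then rate L q σ x else 0)
    - (if η = σ then ∑ x : Fin L, rate L q σ x else 0)

/-- Time-`t` law of the East process started from `η`, evaluated on a set `E`:
`P_t(η,E) = Σ_{σ∈E} exp(tK)(η,σ)`. -/
def law (L : ℕ) (q t : ℝ) (η : Cfg L) (E : Set (Cfg L)) : ℝ :=
  ∑ σ : Cfg L, Set.indicator E (fun σ' => NormedSpace.exp (t • K L q) η σ') σ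

/-- Total variation distance of the time-`t` law started at `η` from π. -/
def tvDist (L : ℕ) (q t : ℝ) (η : Cfg L) : ℝ :=
  (1 / 2) * ∑ σ : Cfg L, |NormedSpace.exp (t • K L q) η σ - weight L q σ|

/-- Mixing time `T_mix(L) = inf {t ≥ 0 : max_η ‖P_t(η,·) − π‖_TV ≤ 1/4}`. -/
def Tmix (L : ℕ) (q : ℝ) : ℝ :=
  sInf {t : ℝ | 0 ≤ t ∧ ∀ η : Cfg L, tvDist L q t η ≤ 1 / 4}

/-- The sub-rate matrix of `K` indexed by the complement of the target set `B`. -/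
def Ksub (L : ℕ) (q : ℝ) (B : Set (Cfg L)) :
    Matrix {σ : Cfg L // σ ∉ B} {σ : Cfg L // σ ∉ B} ℝ :=
  fun a b => K L q a.1 b.1

/-- Survival function of the hitting time of `B` started from `η`:
`P_η(τ_B > t) = Σ_{σ∉B} exp(t K_{Bᶜ})(η,σ)`  (equal to `0` when `η ∈ B`). -/
def surv (L : ℕ) (q : ℝ) (B : Set (Cfg L)) (η : Cfg L) (t : ℝ) : ℝ :=
  letI : Fintype {σ : Cfg L // σ ∉ B} := Fintype.ofFinite _
  ∑ a : {σ : Cfg L // σ ∉ B}, ∑ b : {σ : Cfg L // σ ∉ B},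
    (if a.1 = η then NormedSpace.exp (t • Ksub L q B) a b else 0)

/-- Expected hitting time `E_η[τ_B] = ∫₀^∞ P_η(τ_B > t) dt`. -/
def expHit (L : ℕ) (q : ℝ) (B : Set (Cfg L)) (η : Cfg L) : ℝ :=
  ∫ t in Set.Ioi (0 : ℝ), surv L q B η t

/-- The set `{σ : σ_L = 1}` (particle at the last site). -/
def lastOneSet (L : ℕ) : Set (Cfg L) :=
  {σ | ∀ x : Fin L, x.val + 1 = L → σ x = true}

/-- The set `{σ : σ_L = 0}` (vacancy at the last site). -/
def lastZeroSet (L : ℕ) : Set (Cfg L) :=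
  {σ | ∀ x : Fin L, x.val + 1 = L → σ x = false}

/-- The configuration `𝟙0`: a single vacancy at the last site `L`. -/
def oneZero (L : ℕ) : Cfg L := fun x => decide (x.val + 1 ≠ L)

/-- The all-ones configuration `𝟙`. -/
def allOnes (L : ℕ) : Cfg L := fun _ => true

/-- Mean hitting time `T_hit(L) = E_{𝟙0}[τ_{η_L = 1}]`. -/
def Thit (L : ℕ) (q : ℝ) : ℝ := expHit L q (lastOneSet L) (oneZero L)

/-- `f ≍ h` : `0 < liminf_{q↓0} f(q)/h(q) ≤ limsup_{q↓0} f(q)/h(q) < ∞`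
(liminf/limsup taken in `[0,∞]`). -/
def Asymp (f h : ℝ → ℝ) : Prop :=
  0 < Filter.liminf (fun q => ENNReal.ofReal (f q / h q)) (𝓝[>] (0 : ℝ)) ∧
  Filter.limsup (fun q => ENNReal.ofReal (f q / h q)) (𝓝[>] (0 : ℝ)) < ⊤

/-- `f ≻ h` : there is `β > 0` with `liminf_{q↓0} q^β · f(q)/h(q) > 0`. -/
def SuccSep (f h : ℝ → ℝ) : Prop :=
  ∃ β : ℝ, 0 < β ∧
    0 < Filter.liminf (fun q => ENNReal.ofReal (q ^ β * (f q / h q))) (𝓝[>] (0 : ℝ))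

/-- Number of vacancies (zeros) in a configuration. -/
def zeros (L : ℕ) (σ : Cfg L) : ℕ :=
  (Finset.univ.filter (fun x : Fin L => σ x = false)).card

/-- One legal East move, with both endpoint configurations having at most `m` vacancies. -/
def stepZ (L m : ℕ) (σ σ' : Cfg L) : Prop :=
  (∃ x : Fin L, constraintP L σ x ∧ σ' = flip L σ x) ∧ zeros L σ ≤ m ∧ zeros L σ' ≤ m

/-- Configuration extended to sites `0,1,…`: site `0` carries the frozen vacancy. -/
def extCfg (L : ℕ) (η : Cfg L) : ℕ → Bool :=
  fun i => if h : 1 ≤ i ∧ i ≤ L then η ⟨i - 1, by omega⟩ else false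

/-- The gap at site `x`: distance to the nearest vacancy strictly to the left
(including the frozen vacancy at the origin). -/
def gapAt (L : ℕ) (η : Cfg L) (x : ℕ) : ℕ :=
  sInf {d : ℕ | 0 < d ∧ extCfg L η (x - d) = false}

/-- `φ_{d,x}`: remove the vacancy at site `x` if it is present with gap exactly `d`. -/
def phi (L : ℕ) (d x : ℕ) (η : Cfg L) : Cfg L :=
  fun i => if i.val + 1 = x ∧ η i = false ∧ gapAt L η (i.val + 1) = d then true else η i

/-- The deterministic dynamics: step `k+1` applies `φ_{α_{k+1}}`, where
`α_{k+1} = (k / L + 1, L − k % L)` enumerates `{1,…,L}²` in the order `≺`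
(gap sizes increasing; for a fixed gap size, sites from right to left). -/
def detDyn (L : ℕ) (η : Cfg L) : ℕ → Cfg L
  | 0 => η
  | k + 1 => phi L (k / L + 1) (L - k % L) (detDyn L η k)

/-- The set `A_*` of configurations driven to `𝟙0` by the deterministic dynamics. -/
def Astar (L : ℕ) : Set (Cfg L) :=
  {η | detDyn L η (L ^ 2) = oneZero L}

/-- The internal boundary `∂A_*` of `A_*`. -/
def boundaryAstar (L : ℕ) : Set (Cfg L) :=
  {σ | σ ∈ Astar L ∧ ∃ x : Fin L, constraintP L σ x ∧ flip L σ x ∉ Astar L}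

/-- Capacity between `a` and `B`, via the Dirichlet principle:
`C(a,B) = inf {𝓓(f) : f(a) = 1, f ≡ 0 on B}`. -/
def capacity (L : ℕ) (q : ℝ) (a : Cfg L) (B : Set (Cfg L)) : ℝ :=
  sInf {r : ℝ | ∃ f : Cfg L → ℝ, f a = 1 ∧ (∀ σ ∈ B, f σ = 0) ∧ r = dirichlet L q f}

/-! ### Auxiliary development for Statement 10 -/

section Aux10

/-- The target set `{σ : σ_L = bb}`, generalizing `lastOneSet` and `lastZeroSet`. -/
def SB (L : ℕ) (bb : Bool) : Set (Cfg L) :=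
  {σ | ∀ x : Fin L, x.val + 1 = L → σ x = bb}

instance SBdec (L : ℕ) (bb : Bool) : DecidablePred (· ∈ SB L bb) := fun σ =>
  decidable_of_iff (∀ x : Fin L, x.val + 1 = L → σ x = bb) Iff.rfl

/-- The supposed maximizer: `!bb` at the last site, ones elsewhere. -/
def etaC (L : ℕ) (bb : Bool) : Cfg L := fun x => if x.val + 1 = L then !bb else true

lemma mem_SB_iff {L : ℕ} {bb : Bool} (hL : 1 ≤ L) (σ : Cfg L) :
    σ ∈ SB L bb ↔ σ ⟨L - 1, by omega⟩ = bb := by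
  constructor
  · intro h
    exact h _ (show L - 1 + 1 = L by omega)
  · intro h x hx
    have hx' : x = ⟨L - 1, by omega⟩ := by
      apply Fin.ext; show x.val = L - 1; omega
    rwa [hx']

lemma not_mem_SB_iff {L : ℕ} {bb : Bool} (hL : 1 ≤ L) (σ : Cfg L) :
    σ ∉ SB L bb ↔ σ ⟨L - 1, by omega⟩ = !bb := by
  rw [mem_SB_iff hL]
  cases h : σ ⟨L - 1, by omega⟩ <;> cases bb <;> simp

lemma etaC_not_mem {L : ℕ} {bb : Bool} (hL : 1 ≤ L) : etaC L bb ∉ SB L bb := by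
  rw [not_mem_SB_iff hL]
  simp only [etaC]
  rw [if_pos (show L - 1 + 1 = L by omega)]

lemma cR_nonneg (L : ℕ) (σ : Cfg L) (x : Fin L) : 0 ≤ cR L σ x := by
  unfold cR; split_ifs <;> norm_num

lemma cR_le_one (L : ℕ) (σ : Cfg L) (x : Fin L) : cR L σ x ≤ 1 := by
  unfold cR; split_ifs <;> norm_num

lemma rate_nonneg {L : ℕ} {q : ℝ} (hq0 : 0 ≤ q) (hq1 : q ≤ 1) (σ : Cfg L) (x : Fin L) :
    0 ≤ rate L q σ x := by
  unfold rate
  apply mul_nonneg (cR_nonneg L σ x)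
  split_ifs <;> linarith

lemma rate_le_one {L : ℕ} {q : ℝ} (hq0 : 0 ≤ q) (hq1 : q ≤ 1) (σ : Cfg L) (x : Fin L) :
    rate L q σ x ≤ 1 := by
  unfold rate
  apply mul_le_one₀ (cR_le_one L σ x) ?_ ?_
  · split_ifs <;> linarith
  · split_ifs <;> linarith

lemma sum_rate_le {L : ℕ} {q : ℝ} (hq0 : 0 ≤ q) (hq1 : q ≤ 1) (σ : Cfg L) :
    ∑ x : Fin L, rate L q σ x ≤ (L : ℝ) := by
  calc ∑ x : Fin L, rate L q σ x ≤ ∑ _x : Fin L, (1 : ℝ) :=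
        Finset.sum_le_sum fun x _ => rate_le_one hq0 hq1 σ x
    _ = (L : ℝ) := by simp

lemma cR_congr {L : ℕ} {σ τ : Cfg L} (x : Fin L)
    (h : x.val ≠ 0 → σ ⟨x.val - 1, lt_of_le_of_lt (Nat.sub_le _ _) x.isLt⟩ =
      τ ⟨x.val - 1, lt_of_le_of_lt (Nat.sub_le _ _) x.isLt⟩) : cR L σ x = cR L τ x := by
  unfold cR
  by_cases h0 : x.val = 0
  · simp [h0]
  · rw [if_neg h0, if_neg h0, h h0]

/-- The cone of functions: nonnegative, vanishing on `B`, and monotone under raising the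
rightmost vacancy strictly left of the last site. -/
def coneD (L : ℕ) (bb : Bool) (v : Cfg L → ℝ) : Prop :=
  (∀ σ, 0 ≤ v σ) ∧ (∀ σ ∈ SB L bb, v σ = 0) ∧
    ∀ (σ : Cfg L) (k : Fin L), k.val + 1 < L → σ k = false →
      (∀ j : Fin L, k.val < j.val → j.val + 1 < L → σ j = true) →
      v σ ≤ v (Function.update σ k true)

/-- One uniformization step of the killed chain: `λ = L`. -/
def opN (L : ℕ) (q : ℝ) (bb : Bool) (v : Cfg L → ℝ) : Cfg L → ℝ := fun σ =>
  if σ ∈ SB L bb then 0 else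
    (∑ x : Fin L, rate L q σ x * v (flip L σ x)) +
      ((L : ℝ) - ∑ x : Fin L, rate L q σ x) * v σ

lemma coneD_opN {L : ℕ} {q : ℝ} {bb : Bool} (hL : 1 ≤ L) (hq0 : 0 ≤ q) (hq1 : q ≤ 1)
    {v : Cfg L → ℝ} (hv : coneD L bb v) : coneD L bb (opN L q bb v) := by
  obtain ⟨hv0, hvB, hvp⟩ := hv
  refine ⟨?_, ?_, ?_⟩
  · intro σ
    unfold opN
    split_ifs with h
    · exact le_refl 0
    · have h1 : 0 ≤ ∑ x : Fin L, rate L q σ x * v (flip L σ x) :=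
        Finset.sum_nonneg fun x _ => mul_nonneg (rate_nonneg hq0 hq1 σ x) (hv0 _)
      have h2 : ∑ x : Fin L, rate L q σ x ≤ (L : ℝ) := sum_rate_le hq0 hq1 σ
      have h3 : 0 ≤ v σ := hv0 σ
      nlinarith
  · intro σ hσ; simp [opN, hσ]
  · intro a k hk1 hak htr
    have hbx : ∀ x : Fin L, x ≠ k → Function.update a k true x = a x := fun x hx =>
      Function.update_of_ne hx true a
    have hbk : Function.update a k true k = true := Function.update_self k true a
    set b := Function.update a k true with hbdef
    by_cases haB : a ∈ SB L bb
    · have hbB : b ∈ SB L bb := by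
        intro x hx
        have hxk : x ≠ k := by intro h; rw [h] at hx; omega
        rw [hbx x hxk]; exact haB x hx
      simp [opN, haB, hbB]
    · have hbB : b ∉ SB L bb := by
        intro hbB'
        apply haB
        intro x hx
        have hxk : x ≠ k := by intro h; rw [h] at hx; omega
        have h2 := hbB' x hx
        rwa [hbx x hxk] at h2
      simp only [opN]
      rw [if_neg haB, if_neg hbB]
      obtain ⟨kk, hkkval⟩ : ∃ kk : Fin L, kk.val = k.val + 1 := ⟨⟨k.val + 1, hk1⟩, rfl⟩
      set c := cR L a k with hcdef
      set sa := rate L q a kk with hsadef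
      have hcb : cR L b k = c := by
        rw [hcdef]
        apply cR_congr
        intro h0
        apply hbx
        intro h
        have h2 := congrArg Fin.val h
        simp at h2
        omega
      have hflip_ak : flip L a k = b := by
        show Function.update a k (!(a k)) = b
        rw [hak]
        rfl
      have hflip_bk : flip L b k = a := by
        show Function.update b k (!(b k)) = a
        rw [hbk]
        show Function.update (Function.update a k true) k (!true) = a
        rw [Function.update_idem]
        show Function.update a k false = a
        conv_rhs => rw [← Function.update_eq_self k a]
        rw [hak]
      have hvab : v a ≤ v b := hvp a k hk1 hak htr
      have F1 : ∀ x : Fin L, x.val < k.val →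
          rate L q b x = rate L q a x ∧
            rate L q a x * v (flip L a x) ≤ rate L q b x * v (flip L b x) := by
        intro x hx
        have hxk : x ≠ k := by intro h; rw [h] at hx; omega
        have hr : rate L q b x = rate L q a x := by
          unfold rate
          rw [hbx x hxk]
          congr 1
          apply cR_congr
          intro h0
          apply hbx
          intro h
          have h2 := congrArg Fin.val h
          simp at h2
          omega
        refine ⟨hr, ?_⟩
        have hfl : flip L b x = Function.update (flip L a x) k true := by
          show Function.update b x (!(b x)) = _
          rw [hbx x hxk]
          show Function.update (Function.update a k true) x (!(a x)) =
            Function.update (Function.update a x (!(a x))) k true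
          exact Function.update_comm (fun h => hxk h.symm) true (!(a x)) a
        have h1 : v (flip L a x) ≤ v (flip L b x) := by
          rw [hfl]
          apply hvp (flip L a x) k hk1
          · show Function.update a x (!(a x)) k = false
            rw [Function.update_of_ne (fun h => hxk h.symm) _ a]
            exact hak
          · intro j hj1 hj2
            show Function.update a x (!(a x)) j = true
            rw [Function.update_of_ne (fun h => by rw [h] at hj1; omega) _ a]
            exact htr j hj1 hj2
        rw [hr]
        exact mul_le_mul_of_nonneg_left h1 (rate_nonneg hq0 hq1 a x)
      have hcRa : ∀ x : Fin L, k.val + 1 < x.val → cR L a x = 0 := by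
        intro x hx
        unfold cR
        rw [if_neg (show ¬ x.val = 0 by omega)]
        have h7 : a ⟨x.val - 1, lt_of_le_of_lt (Nat.sub_le _ _) x.isLt⟩ = true :=
          htr _ (show k.val < x.val - 1 by omega)
            (show x.val - 1 + 1 < L by have := x.isLt; omega)
        rw [h7]
        simp
      have hcRb : ∀ x : Fin L, k.val < x.val → cR L b x = 0 := by
        intro x hx
        unfold cR
        rw [if_neg (show ¬ x.val = 0 by omega)]
        have h7 : b ⟨x.val - 1, lt_of_le_of_lt (Nat.sub_le _ _) x.isLt⟩ = true := by
          by_cases h8 : x.val - 1 = k.val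
          · have h9 : (⟨x.val - 1, lt_of_le_of_lt (Nat.sub_le _ _) x.isLt⟩ : Fin L) = k :=
              Fin.ext h8
            rw [h9]; exact hbk
          · rw [hbx _ (fun hh => h8 (congrArg Fin.val hh))]
            exact htr _ (show k.val < x.val - 1 by omega)
              (show x.val - 1 + 1 < L by have := x.isLt; omega)
        rw [h7]
        simp
      have F2 : ∀ x : Fin L,
          rate L q a x * v (flip L a x) ≤
            (if x.val < k.val then rate L q b x * v (flip L b x) else 0) +
              ((if x = k then c * (1 - q) * v b else 0) +
                (if x = kk then sa * v a else 0)) := by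
        intro x
        rcases lt_trichotomy x.val k.val with hx | hx | hx
        · rw [if_pos hx, if_neg (fun h => by rw [h] at hx; omega : ¬ x = k),
              if_neg (fun h => by rw [h] at hx; omega : ¬ x = kk)]
          have h2 := (F1 x hx).2
          linarith
        · have hxk : x = k := Fin.ext hx
          rw [if_neg (show ¬ x.val < k.val by omega), if_pos hxk,
              if_neg (fun h => by rw [h] at hx; omega : ¬ x = kk)]
          have h1 : rate L q a x * v (flip L a x) = c * (1 - q) * v b := by
            rw [hxk, hflip_ak]
            unfold rate
            rw [hak, hcdef]
            simp
          linarith [h1.le]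
        · rw [if_neg (show ¬ x.val < k.val by omega),
              if_neg (fun h => by rw [h] at hx; omega : ¬ x = k)]
          by_cases hxkk : x = kk
          · rw [if_pos hxkk]
            have hxval : x.val = k.val + 1 := by rw [hxkk, hkkval]
            have hsax : sa = rate L q a x := by rw [hsadef, hxkk]
            have hvf : v (flip L a x) ≤ v a := by
              by_cases h2 : x.val + 1 < L
              · have hax : a x = true := htr x (by omega) h2
                have h1 : flip L a x = Function.update a x false := by
                  show Function.update a x (!(a x)) = _
                  rw [hax]
                  rfl
                have h3 : Function.update (flip L a x) x true = a := by
                  rw [h1, Function.update_idem]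
                  conv_rhs => rw [← Function.update_eq_self x a]
                  rw [hax]
                have h4 : v (flip L a x) ≤ v (Function.update (flip L a x) x true) := by
                  apply hvp (flip L a x) x h2
                  · show Function.update a x (!(a x)) x = false
                    rw [Function.update_self, hax]
                    rfl
                  · intro j hj1 hj2
                    show Function.update a x (!(a x)) j = true
                    rw [Function.update_of_ne (fun hh => by rw [hh] at hj1; omega) _ a]
                    exact htr j (by omega) hj2
                rwa [h3] at h4
              · have hxL : x.val + 1 = L := by have := x.isLt; omega
                have hmem : flip L a x ∈ SB L bb := by
                  rw [mem_SB_iff hL]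
                  have hkeq : (⟨L - 1, by omega⟩ : Fin L) = x := by
                    apply Fin.ext; show L - 1 = x.val; omega
                  rw [hkeq]
                  show Function.update a x (!(a x)) x = bb
                  rw [Function.update_self]
                  have h5 := (not_mem_SB_iff hL a).mp haB
                  rw [hkeq] at h5
                  rw [h5]
                  simp
                rw [hvB _ hmem]
                exact hv0 a
            have h6 : rate L q a x * v (flip L a x) ≤ rate L q a x * v a :=
              mul_le_mul_of_nonneg_left hvf (rate_nonneg hq0 hq1 a x)
            rw [hsax]
            linarith
          · have hx2 : k.val + 1 < x.val := by
              have h3 : x.val ≠ k.val + 1 := fun hh => hxkk (Fin.ext (hh.trans hkkval.symm))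
              omega
            have h4 : rate L q a x = 0 := by
              unfold rate; rw [hcRa x hx2]; ring
            rw [if_neg hxkk, h4]
            simp
      have F3 : ∀ x : Fin L,
          rate L q b x * v (flip L b x) =
            (if x.val < k.val then rate L q b x * v (flip L b x) else 0) +
              (if x = k then c * q * v a else 0) := by
        intro x
        rcases lt_trichotomy x.val k.val with hx | hx | hx
        · rw [if_pos hx, if_neg (fun h => by rw [h] at hx; omega : ¬ x = k)]; ring
        · have hxk : x = k := Fin.ext hx
          rw [if_neg (show ¬ x.val < k.val by omega), if_pos hxk, hxk, hflip_bk]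
          unfold rate
          rw [hcb, hbk]
          simp
        · rw [if_neg (show ¬ x.val < k.val by omega),
              if_neg (fun h => by rw [h] at hx; omega : ¬ x = k)]
          unfold rate
          rw [hcRb x hx]
          ring
      have F4 : ∀ x : Fin L,
          rate L q a x =
            (if x.val < k.val then rate L q a x else 0) +
              ((if x = k then c * (1 - q) else 0) + (if x = kk then sa else 0)) := by
        intro x
        rcases lt_trichotomy x.val k.val with hx | hx | hx
        · rw [if_pos hx, if_neg (fun h => by rw [h] at hx; omega : ¬ x = k),
              if_neg (fun h => by rw [h] at hx; omega : ¬ x = kk)]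
          ring
        · have hxk : x = k := Fin.ext hx
          rw [if_neg (show ¬ x.val < k.val by omega), if_pos hxk,
              if_neg (fun h => by rw [h] at hx; omega : ¬ x = kk), hxk]
          unfold rate
          rw [hak, hcdef]
          simp
        · rw [if_neg (show ¬ x.val < k.val by omega),
              if_neg (fun h => by rw [h] at hx; omega : ¬ x = k)]
          by_cases hxkk : x = kk
          · rw [if_pos hxkk, hsadef, hxkk]; ring
          · have hx2 : k.val + 1 < x.val := by
              have h3 : x.val ≠ k.val + 1 := fun hh => hxkk (Fin.ext (hh.trans hkkval.symm))
              omega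
            rw [if_neg hxkk]
            unfold rate
            rw [hcRa x hx2]
            ring
      have F5 : ∀ x : Fin L,
          rate L q b x =
            (if x.val < k.val then rate L q a x else 0) + (if x = k then c * q else 0) := by
        intro x
        rcases lt_trichotomy x.val k.val with hx | hx | hx
        · rw [if_pos hx, if_neg (fun h => by rw [h] at hx; omega : ¬ x = k), (F1 x hx).1]
          ring
        · have hxk : x = k := Fin.ext hx
          rw [if_neg (show ¬ x.val < k.val by omega), if_pos hxk, hxk]
          unfold rate
          rw [hcb, hbk]
          simp
        · rw [if_neg (show ¬ x.val < k.val by omega),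
              if_neg (fun h => by rw [h] at hx; omega : ¬ x = k)]
          unfold rate
          rw [hcRb x hx]
          ring
      have F6 : ∑ x : Fin L, (if x.val < k.val then rate L q a x else 0) ≤ (L : ℝ) - 1 := by
        have h1 : ∀ x : Fin L,
            (if x.val < k.val then rate L q a x else 0) ≤ (if x = k then 0 else 1) := by
          intro x
          by_cases hx : x.val < k.val
          · rw [if_pos hx, if_neg (fun h => by rw [h] at hx; omega : ¬ x = k)]
            exact rate_le_one hq0 hq1 a x
          · rw [if_neg hx]
            split_ifs <;> norm_num
        calc ∑ x : Fin L, (if x.val < k.val then rate L q a x else 0)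
            ≤ ∑ x : Fin L, (if x = k then (0 : ℝ) else 1) := Finset.sum_le_sum fun x _ => h1 x
          _ = (L : ℝ) - 1 := by
              have h2 : ∀ x : Fin L, (if x = k then (0 : ℝ) else 1) =
                  1 - (if x = k then 1 else 0) := by intro x; split_ifs <;> ring
              rw [Finset.sum_congr rfl fun x _ => h2 x, Finset.sum_sub_distrib,
                Finset.sum_ite_eq' Finset.univ k fun _ => (1 : ℝ)]
              simp
      have hSa : (∑ x : Fin L, rate L q a x * v (flip L a x)) ≤
          (∑ x : Fin L, (if x.val < k.val then rate L q b x * v (flip L b x) else 0)) +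
            (c * (1 - q) * v b + sa * v a) := by
        calc (∑ x : Fin L, rate L q a x * v (flip L a x))
            ≤ ∑ x : Fin L, ((if x.val < k.val then rate L q b x * v (flip L b x) else 0) +
                ((if x = k then c * (1 - q) * v b else 0) + (if x = kk then sa * v a else 0))) :=
              Finset.sum_le_sum fun x _ => F2 x
          _ = _ := by
              rw [Finset.sum_add_distrib, Finset.sum_add_distrib,
                Finset.sum_ite_eq' Finset.univ k fun _ => c * (1 - q) * v b,
                Finset.sum_ite_eq' Finset.univ kk fun _ => sa * v a]
              simp
      have hSb : (∑ x : Fin L, rate L q b x * v (flip L b x)) =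
          (∑ x : Fin L, (if x.val < k.val then rate L q b x * v (flip L b x) else 0)) +
            c * q * v a := by
        rw [Finset.sum_congr rfl fun x _ => F3 x, Finset.sum_add_distrib,
          Finset.sum_ite_eq' Finset.univ k fun _ => c * q * v a]
        simp
      have hRa : (∑ x : Fin L, rate L q a x) =
          (∑ x : Fin L, (if x.val < k.val then rate L q a x else 0)) + (c * (1 - q) + sa) := by
        rw [Finset.sum_congr rfl fun x _ => F4 x, Finset.sum_add_distrib, Finset.sum_add_distrib,
          Finset.sum_ite_eq' Finset.univ k fun _ => c * (1 - q),
          Finset.sum_ite_eq' Finset.univ kk fun _ => sa]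
        simp
      have hRb : (∑ x : Fin L, rate L q b x) =
          (∑ x : Fin L, (if x.val < k.val then rate L q a x else 0)) + c * q := by
        rw [Finset.sum_congr rfl fun x _ => F5 x, Finset.sum_add_distrib,
          Finset.sum_ite_eq' Finset.univ k fun _ => c * q]
        simp
      have hc0 : 0 ≤ c := by rw [hcdef]; exact cR_nonneg L a k
      have hc1 : c ≤ 1 := by rw [hcdef]; exact cR_le_one L a k
      have hsa0 : 0 ≤ sa := by rw [hsadef]; exact rate_nonneg hq0 hq1 a kk
      have hva0 : 0 ≤ v a := hv0 a
      have hprod : 0 ≤ ((L : ℝ) -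
          (∑ x : Fin L, (if x.val < k.val then rate L q a x else 0)) - c) * (v b - v a) :=
        mul_nonneg (by linarith [F6]) (by linarith [hvab])
      rw [hRa, hRb]
      nlinarith [hSa, hSb, hprod, hva0, hvab, hsa0]

end Aux10

/-- The uniformized nonnegative matrix `N = K_{Bᶜ} + L·Id`. -/
def NN (L : ℕ) (q : ℝ) (bb : Bool) :
    Matrix {σ : Cfg L // σ ∉ SB L bb} {σ : Cfg L // σ ∉ SB L bb} ℝ :=
  Ksub L q (SB L bb) + (L : ℝ) • 1

/-- Extension of a vector on `Bᶜ` by `0` on `B`. -/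
def extF (L : ℕ) (bb : Bool) (u : {σ : Cfg L // σ ∉ SB L bb} → ℝ) : Cfg L → ℝ :=
  fun σ => if h : σ ∈ SB L bb then 0 else u ⟨σ, h⟩

lemma K_row_sum (L : ℕ) (q : ℝ) (w : Cfg L → ℝ) (σ : Cfg L) :
    (∑ τ : Cfg L, K L q σ τ * w τ) =
      (∑ x : Fin L, rate L q σ x * w (flip L σ x)) -
        (∑ x : Fin L, rate L q σ x) * w σ := by
  unfold K
  rw [Finset.sum_congr rfl (fun τ _ => by rw [sub_mul]), Finset.sum_sub_distrib]
  congr 1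
  · rw [Finset.sum_congr rfl (fun τ _ => by rw [Finset.sum_mul]), Finset.sum_comm]
    apply Finset.sum_congr rfl
    intro x _
    have h1 : ∀ τ : Cfg L, (if τ = flip L σ x then rate L q σ x else 0) * w τ =
        (if τ = flip L σ x then rate L q σ x * w (flip L σ x) else 0) := by
      intro τ
      split_ifs with h
      · rw [h]
      · ring
    rw [Finset.sum_congr rfl fun τ _ => h1 τ,
      Finset.sum_ite_eq' Finset.univ (flip L σ x) fun _ => rate L q σ x * w (flip L σ x)]
    simp
  · have h1 : ∀ τ : Cfg L, (if τ = σ then ∑ x : Fin L, rate L q σ x else 0) * w τ =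
        (if τ = σ then (∑ x : Fin L, rate L q σ x) * w σ else 0) := by
      intro τ
      split_ifs with h
      · rw [h]
      · ring
    rw [Finset.sum_congr rfl fun τ _ => h1 τ,
      Finset.sum_ite_eq' Finset.univ σ fun _ => (∑ x : Fin L, rate L q σ x) * w σ]
    simp

lemma sum_subtype_SB (L : ℕ) (bb : Bool) (g : Cfg L → ℝ) (hg : ∀ σ ∈ SB L bb, g σ = 0) :
    letI : Fintype {σ : Cfg L // σ ∉ SB L bb} := Fintype.ofFinite _
    (∑ b : {σ : Cfg L // σ ∉ SB L bb}, g b.1) = ∑ τ : Cfg L, g τ := by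
  letI : Fintype {σ : Cfg L // σ ∉ SB L bb} := Fintype.ofFinite _
  rw [← Finset.sum_subtype (Finset.univ.filter (fun τ : Cfg L => τ ∉ SB L bb))
    (by intro x; simp) g]
  rw [Finset.sum_filter]
  apply Finset.sum_congr rfl
  intro τ _
  by_cases h : τ ∈ SB L bb
  · rw [if_neg (by simpa using h), hg τ h]
  · rw [if_pos h]

lemma extF_NN_mulVec (L : ℕ) (q : ℝ) (bb : Bool)
    (u : {σ : Cfg L // σ ∉ SB L bb} → ℝ) :
    letI : Fintype {σ : Cfg L // σ ∉ SB L bb} := Fintype.ofFinite _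
    extF L bb ((NN L q bb).mulVec u) = opN L q bb (extF L bb u) := by
  letI : Fintype {σ : Cfg L // σ ∉ SB L bb} := Fintype.ofFinite _
  funext σ
  show (if h : σ ∈ SB L bb then 0 else ((NN L q bb).mulVec u) ⟨σ, h⟩) = opN L q bb (extF L bb u) σ
  unfold opN
  by_cases h : σ ∈ SB L bb
  · rw [dif_pos h, if_pos h]
  · rw [dif_neg h, if_neg h]
    have hval : ∀ b : {σ' : Cfg L // σ' ∉ SB L bb}, extF L bb u b.1 = u b := by
      intro b
      show (if h : b.1 ∈ SB L bb then 0 else u ⟨b.1, h⟩) = u b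
      rw [dif_neg b.2]
    have hNNapp : ∀ b : {σ' : Cfg L // σ' ∉ SB L bb},
        NN L q bb ⟨σ, h⟩ b = K L q σ b.1 +
          (L : ℝ) * (if (⟨σ, h⟩ : {σ' : Cfg L // σ' ∉ SB L bb}) = b then 1 else 0) := by
      intro b
      show (Ksub L q (SB L bb) + (L : ℝ) • 1) ⟨σ, h⟩ b = _
      rw [Matrix.add_apply, Matrix.smul_apply, Matrix.one_apply]
      show Ksub L q (SB L bb) ⟨σ, h⟩ b + _ = _
      unfold Ksub
      simp [smul_eq_mul]
    calc ((NN L q bb).mulVec u) ⟨σ, h⟩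
        = ∑ b : {σ' : Cfg L // σ' ∉ SB L bb}, NN L q bb ⟨σ, h⟩ b * u b := by
          simp [Matrix.mulVec, dotProduct]
      _ = ∑ b : {σ' : Cfg L // σ' ∉ SB L bb}, (K L q σ b.1 * extF L bb u b.1 +
            (L : ℝ) * ((if (⟨σ, h⟩ : {σ' : Cfg L // σ' ∉ SB L bb}) = b then 1 else 0) * u b)) := by
          apply Finset.sum_congr rfl
          intro b _
          rw [hNNapp b, hval b]
          ring
      _ = (∑ b : {σ' : Cfg L // σ' ∉ SB L bb}, K L q σ b.1 * extF L bb u b.1) +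
            (L : ℝ) * ∑ b : {σ' : Cfg L // σ' ∉ SB L bb}, (if (⟨σ, h⟩ : {σ' : Cfg L // σ' ∉ SB L bb}) = b then 1 else 0) * u b := by
          rw [Finset.sum_add_distrib, Finset.mul_sum]
      _ = (∑ τ : Cfg L, K L q σ τ * extF L bb u τ) + (L : ℝ) * u ⟨σ, h⟩ := by
          congr 1
          · exact sum_subtype_SB L bb _ (fun τ hτ => by
              show K L q σ τ * (if h' : τ ∈ SB L bb then 0 else u ⟨τ, h'⟩) = 0
              rw [dif_pos hτ]; ring)
          · congr 1
            rw [Finset.sum_congr rfl (fun b _ => by rw [ite_mul, one_mul, zero_mul]),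
              Finset.sum_ite_eq Finset.univ
                (⟨σ, h⟩ : {σ' : Cfg L // σ' ∉ SB L bb}) u]
            simp
      _ = _ := by
          rw [K_row_sum]
          show _ = (∑ x : Fin L, rate L q σ x * extF L bb u (flip L σ x)) +
            ((L : ℝ) - ∑ x : Fin L, rate L q σ x) * extF L bb u σ
          have h2 : extF L bb u σ = u ⟨σ, h⟩ := by
            show (if h' : σ ∈ SB L bb then 0 else u ⟨σ, h'⟩) = _
            rw [dif_neg h]
          rw [h2]
          ring

lemma NN_entry_nonneg (L : ℕ) {q : ℝ} (bb : Bool) (hq0 : 0 ≤ q) (hq1 : q ≤ 1)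
    (a b : {σ : Cfg L // σ ∉ SB L bb}) : 0 ≤ NN L q bb a b := by
  have happ : NN L q bb a b = K L q a.1 b.1 +
      (L : ℝ) * (if a = b then 1 else 0) := by
    show (Ksub L q (SB L bb) + (L : ℝ) • 1) a b = _
    rw [Matrix.add_apply, Matrix.smul_apply, Matrix.one_apply]
    show Ksub L q (SB L bb) a b + _ = _
    unfold Ksub
    simp [smul_eq_mul]
  rw [happ]
  unfold K
  by_cases hab : a = b
  · subst hab
    rw [if_pos rfl, if_pos rfl]
    have hz : ∀ x : Fin L, (if a.1 = flip L a.1 x then rate L q a.1 x else 0) = 0 := by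
      intro x
      rw [if_neg]
      intro hEq
      have h2 := congrFun hEq x
      rw [show flip L a.1 x x = !(a.1 x) from Function.update_self x _ a.1] at h2
      cases h3 : a.1 x <;> rw [h3] at h2 <;> simp at h2
    rw [Finset.sum_congr rfl fun x _ => hz x]
    have h4 := sum_rate_le (L := L) hq0 hq1 a.1
    simp only [Finset.sum_const_zero]
    linarith
  · rw [if_neg hab, if_neg (fun hh => hab (Subtype.ext hh.symm))]
    have h1 : 0 ≤ ∑ x : Fin L, (if b.1 = flip L a.1 x then rate L q a.1 x else 0) :=
      Finset.sum_nonneg fun x _ => by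
        split_ifs
        · exact rate_nonneg hq0 hq1 a.1 x
        · exact le_refl 0
    linarith

lemma coneD_pow (L : ℕ) {q : ℝ} (bb : Bool) (hL : 1 ≤ L) (hq0 : 0 ≤ q) (hq1 : q ≤ 1) (n : ℕ) :
    letI : Fintype {σ : Cfg L // σ ∉ SB L bb} := Fintype.ofFinite _
    coneD L bb (extF L bb ((NN L q bb ^ n).mulVec fun _ => 1)) := by
  letI : Fintype {σ : Cfg L // σ ∉ SB L bb} := Fintype.ofFinite _
  induction n with
  | zero =>
    rw [pow_zero, Matrix.one_mulVec]
    refine ⟨fun σ => ?_, fun σ hσ => ?_, fun σ k hk1 hσk htr => ?_⟩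
    · show (0:ℝ) ≤ if h : σ ∈ SB L bb then 0 else 1
      split_ifs <;> norm_num
    · show (if h : σ ∈ SB L bb then (0:ℝ) else 1) = 0
      rw [dif_pos hσ]
    · show (if h : σ ∈ SB L bb then (0:ℝ) else 1) ≤
        (if h : Function.update σ k true ∈ SB L bb then (0:ℝ) else 1)
      by_cases hσ : σ ∈ SB L bb
      · rw [dif_pos hσ]
        split_ifs <;> norm_num
      · have h2 : Function.update σ k true ∉ SB L bb := by
          rw [not_mem_SB_iff hL] at hσ ⊢
          rw [Function.update_of_ne (fun hh => by
            have h3 := congrArg Fin.val hh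
            simp at h3
            omega) true σ]
          exact hσ
        rw [dif_neg hσ, dif_neg h2]
  | succ n ih =>
    rw [pow_succ', ← Matrix.mulVec_mulVec, extF_NN_mulVec]
    exact coneD_opN hL hq0 hq1 ih

lemma pow_entry_nonneg (L : ℕ) {q : ℝ} (bb : Bool) (hq0 : 0 ≤ q) (hq1 : q ≤ 1) (n : ℕ) :
    letI : Fintype {σ : Cfg L // σ ∉ SB L bb} := Fintype.ofFinite _
    ∀ a b : {σ : Cfg L // σ ∉ SB L bb}, 0 ≤ (NN L q bb ^ n) a b := by
  letI : Fintype {σ : Cfg L // σ ∉ SB L bb} := Fintype.ofFinite _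
  induction n with
  | zero =>
    intro a b
    rw [pow_zero, Matrix.one_apply]
    split_ifs <;> norm_num
  | succ n ih =>
    intro a b
    rw [pow_succ, Matrix.mul_apply]
    exact Finset.sum_nonneg fun c _ =>
      mul_nonneg (ih a c) (NN_entry_nonneg L bb hq0 hq1 c b)

lemma coneD_le_eta {L : ℕ} {bb : Bool} (hL : 1 ≤ L) {v : Cfg L → ℝ}
    (hv : coneD L bb v) (σ : Cfg L) : v σ ≤ v (etaC L bb) := by
  obtain ⟨hv0, hvB, hvp⟩ := hv
  suffices H : ∀ (n : ℕ) (σ : Cfg L),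
      (Finset.univ.filter fun j : Fin L => j.val + 1 < L ∧ σ j = false).card ≤ n →
      v σ ≤ v (etaC L bb) from
    H _ σ le_rfl
  intro n
  induction n with
  | zero =>
    intro σ hcard
    have hall : ∀ j : Fin L, j.val + 1 < L → σ j = true := by
      intro j hj
      by_contra hfalse
      have h2 : σ j = false := by
        cases h3 : σ j
        · rfl
        · exact absurd h3 hfalse
      have h4 : j ∈ Finset.univ.filter fun j : Fin L => j.val + 1 < L ∧ σ j = false := by
        simp [hj, h2]
      have h5 := Finset.card_pos.mpr ⟨j, h4⟩
      omega
    by_cases hσB : σ ∈ SB L bb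
    · rw [hvB σ hσB]
      exact hv0 _
    · have hσeta : σ = etaC L bb := by
        funext x
        show σ x = if x.val + 1 = L then !bb else true
        by_cases hx : x.val + 1 = L
        · rw [if_pos hx]
          have h6 := (not_mem_SB_iff hL σ).mp hσB
          have h7 : (⟨L - 1, by omega⟩ : Fin L) = x := by
            apply Fin.ext; show L - 1 = x.val; omega
          rwa [h7] at h6
        · rw [if_neg hx]
          exact hall x (by have := x.isLt; omega)
      rw [hσeta]
  | succ n ih =>
    intro σ hcard
    by_cases hc0 : (Finset.univ.filter fun j : Fin L => j.val + 1 < L ∧ σ j = false).card ≤ n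
    · exact ih σ hc0
    · set S := Finset.univ.filter fun j : Fin L => j.val + 1 < L ∧ σ j = false with hS
      have hSne : S.Nonempty := by
        rw [← Finset.card_pos]
        omega
      set k := S.max' hSne with hk
      have hkS : k ∈ S := S.max'_mem hSne
      rw [hS, Finset.mem_filter] at hkS
      obtain ⟨-, hk1, hk2⟩ := hkS
      have htr : ∀ j : Fin L, k.val < j.val → j.val + 1 < L → σ j = true := by
        intro j hj1 hj2
        by_contra hfalse
        have h2 : σ j = false := by
          cases h3 : σ j
          · rfl
          · exact absurd h3 hfalse
        have h4 : j ∈ S := by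
          rw [hS, Finset.mem_filter]
          exact ⟨Finset.mem_univ j, hj2, h2⟩
        have h5 := S.le_max' j h4
        rw [← hk] at h5
        have h6 : j.val ≤ k.val := h5
        omega
      have hstep := hvp σ k hk1 hk2 htr
      refine hstep.trans (ih (Function.update σ k true) ?_)
      have hsub : (Finset.univ.filter fun j : Fin L =>
          j.val + 1 < L ∧ Function.update σ k true j = false) ⊆ S.erase k := by
        intro j hj
        rw [Finset.mem_filter] at hj
        obtain ⟨-, hj1, hj2⟩ := hj
        have hjk : j ≠ k := by
          intro hh
          rw [hh, Function.update_self] at hj2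
          simp at hj2
        rw [Finset.mem_erase]
        refine ⟨hjk, ?_⟩
        rw [hS, Finset.mem_filter]
        rw [Function.update_of_ne hjk true σ] at hj2
        exact ⟨Finset.mem_univ j, hj1, hj2⟩
      calc (Finset.univ.filter fun j : Fin L =>
            j.val + 1 < L ∧ Function.update σ k true j = false).card
          ≤ (S.erase k).card := Finset.card_le_card hsub
        _ = S.card - 1 := by
            rw [Finset.card_erase_of_mem]
            rw [hS, Finset.mem_filter]
            exact ⟨Finset.mem_univ k, hk1, hk2⟩
        _ ≤ n := by omega

lemma exp_scalar_one (L : ℕ) (bb : Bool) (c : ℝ) :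
    letI : Fintype {σ : Cfg L // σ ∉ SB L bb} := Fintype.ofFinite _
    NormedSpace.exp (c • (1 : Matrix {σ : Cfg L // σ ∉ SB L bb}
      {σ : Cfg L // σ ∉ SB L bb} ℝ)) = Real.exp c • 1 := by
  letI : Fintype {σ : Cfg L // σ ∉ SB L bb} := Fintype.ofFinite _
  have hsum : Summable (fun n : ℕ => (n.factorial : ℝ)⁻¹ • c ^ n) :=
    NormedSpace.expSeries_summable' c
  rw [NormedSpace.exp_eq_tsum ℝ]
  have h1 : ∀ n : ℕ, (n.factorial : ℝ)⁻¹ •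
      (c • (1 : Matrix {σ : Cfg L // σ ∉ SB L bb} {σ : Cfg L // σ ∉ SB L bb} ℝ)) ^ n =
      ((n.factorial : ℝ)⁻¹ • c ^ n) • 1 := by
    intro n
    rw [smul_pow, one_pow, smul_smul, smul_eq_mul]
  beta_reduce
  rw [tsum_congr h1, hsum.tsum_smul_const]
  congr 1
  rw [Real.exp_eq_exp_ℝ, NormedSpace.exp_eq_tsum ℝ]

lemma exp_split (L : ℕ) (q : ℝ) (bb : Bool) (t : ℝ) :
    letI : Fintype {σ : Cfg L // σ ∉ SB L bb} := Fintype.ofFinite _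
    NormedSpace.exp (t • Ksub L q (SB L bb)) =
      Real.exp (-((L : ℝ) * t)) • NormedSpace.exp (t • NN L q bb) := by
  letI : Fintype {σ : Cfg L // σ ∉ SB L bb} := Fintype.ofFinite _
  have hA : t • Ksub L q (SB L bb) = t • NN L q bb +
      (-((L : ℝ) * t)) • (1 : Matrix {σ : Cfg L // σ ∉ SB L bb}
        {σ : Cfg L // σ ∉ SB L bb} ℝ) := by
    unfold NN
    rw [smul_add, smul_smul, add_assoc, ← add_smul]
    have h0 : t * (L : ℝ) + -((L : ℝ) * t) = 0 := by ring
    rw [h0, zero_smul, add_zero]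
  rw [hA, Matrix.exp_add_of_commute _ _
    (((Commute.one_right (NN L q bb)).smul_right _).smul_left _)]
  rw [exp_scalar_one L bb, mul_smul_comm, mul_one]

lemma exp_NN_entry (L : ℕ) (q : ℝ) (bb : Bool) (t : ℝ)
    (f : (letI : Fintype {σ : Cfg L // σ ∉ SB L bb} := Fintype.ofFinite _
      Matrix {σ : Cfg L // σ ∉ SB L bb} {σ : Cfg L // σ ∉ SB L bb} ℝ) →ₗ[ℝ] ℝ) :
    letI : Fintype {σ : Cfg L // σ ∉ SB L bb} := Fintype.ofFinite _
    f (NormedSpace.exp (t • NN L q bb)) =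
        (∑' n : ℕ, ((n.factorial : ℝ)⁻¹ * t ^ n) * f (NN L q bb ^ n)) ∧
      Summable (fun n : ℕ => ((n.factorial : ℝ)⁻¹ * t ^ n) * f (NN L q bb ^ n)) := by
  letI : Fintype {σ : Cfg L // σ ∉ SB L bb} := Fintype.ofFinite _
  letI : SeminormedRing (Matrix {σ : Cfg L // σ ∉ SB L bb} {σ : Cfg L // σ ∉ SB L bb} ℝ) :=
    Matrix.linftyOpSemiNormedRing
  letI : NormedRing (Matrix {σ : Cfg L // σ ∉ SB L bb} {σ : Cfg L // σ ∉ SB L bb} ℝ) :=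
    Matrix.linftyOpNormedRing
  letI : NormedAlgebra ℝ (Matrix {σ : Cfg L // σ ∉ SB L bb} {σ : Cfg L // σ ∉ SB L bb} ℝ) :=
    Matrix.linftyOpNormedAlgebra
  have hsum : Summable (fun n : ℕ => (n.factorial : ℝ)⁻¹ • (t • NN L q bb) ^ n) :=
    NormedSpace.expSeries_summable' _
  have hf : Continuous f := f.continuous_of_finiteDimensional
  set F : Matrix {σ : Cfg L // σ ∉ SB L bb} {σ : Cfg L // σ ∉ SB L bb} ℝ →L[ℝ] ℝ :=
    ⟨f, hf⟩ with hF
  have hFapp : ∀ M, F M = f M := fun _ => rfl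
  have hterm : ∀ n : ℕ, F ((n.factorial : ℝ)⁻¹ • (t • NN L q bb) ^ n) =
      ((n.factorial : ℝ)⁻¹ * t ^ n) * f (NN L q bb ^ n) := by
    intro n
    rw [smul_pow, smul_smul, F.map_smul, smul_eq_mul, hFapp]
  constructor
  · rw [← hFapp, NormedSpace.exp_eq_tsum ℝ]
    beta_reduce
    rw [F.map_tsum hsum]
    exact tsum_congr hterm
  · have h2 := hsum.map F F.continuous
    have h3 : (⇑F ∘ fun n : ℕ => (n.factorial : ℝ)⁻¹ • (t • NN L q bb) ^ n) =
        fun n : ℕ => ((n.factorial : ℝ)⁻¹ * t ^ n) * f (NN L q bb ^ n) := by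
      funext n
      exact hterm n
    rwa [h3] at h2

lemma exp_Ksub_entry_nonneg (L : ℕ) {q : ℝ} (bb : Bool) (hq0 : 0 ≤ q) (hq1 : q ≤ 1)
    (t : ℝ) (ht : 0 ≤ t) :
    letI : Fintype {σ : Cfg L // σ ∉ SB L bb} := Fintype.ofFinite _
    ∀ a b : {σ : Cfg L // σ ∉ SB L bb},
      0 ≤ NormedSpace.exp (t • Ksub L q (SB L bb)) a b := by
  letI : Fintype {σ : Cfg L // σ ∉ SB L bb} := Fintype.ofFinite _
  intro a b
  rw [exp_split L q bb t, Matrix.smul_apply, smul_eq_mul]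
  apply mul_nonneg (Real.exp_pos _).le
  let f : Matrix {σ : Cfg L // σ ∉ SB L bb} {σ : Cfg L // σ ∉ SB L bb} ℝ →ₗ[ℝ] ℝ :=
    { toFun := fun M => M a b, map_add' := fun _ _ => rfl, map_smul' := fun _ _ => rfl }
  have hfapp : ∀ M : Matrix {σ : Cfg L // σ ∉ SB L bb} {σ : Cfg L // σ ∉ SB L bb} ℝ,
      f M = M a b := fun _ => rfl
  obtain ⟨h1, _⟩ := exp_NN_entry L q bb t f
  have h5 : NormedSpace.exp (t • NN L q bb) a b =
      f (NormedSpace.exp (t • NN L q bb)) := rfl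
  rw [h5, h1]
  apply tsum_nonneg
  intro n
  apply mul_nonneg (mul_nonneg (by positivity) (pow_nonneg ht n))
  rw [hfapp]
  exact pow_entry_nonneg L bb hq0 hq1 n a b

lemma coneD_exp_row (L : ℕ) {q : ℝ} (bb : Bool) (hL : 1 ≤ L) (hq0 : 0 ≤ q) (hq1 : q ≤ 1)
    (t : ℝ) (ht : 0 ≤ t) :
    letI : Fintype {σ : Cfg L // σ ∉ SB L bb} := Fintype.ofFinite _
    coneD L bb (fun σ => if h : σ ∈ SB L bb then 0 else
      ∑ b : {σ' : Cfg L // σ' ∉ SB L bb},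
        NormedSpace.exp (t • Ksub L q (SB L bb)) ⟨σ, h⟩ b) := by
  letI : Fintype {σ : Cfg L // σ ∉ SB L bb} := Fintype.ofFinite _
  have hext0 : ∀ (σ : Cfg L), σ ∈ SB L bb → ∀ n : ℕ,
      extF L bb ((NN L q bb ^ n).mulVec fun _ => 1) σ = 0 := by
    intro σ h n
    show (if h' : σ ∈ SB L bb then 0 else ((NN L q bb ^ n).mulVec fun _ => 1) ⟨σ, h'⟩) = 0
    rw [dif_pos h]
  have hrow : ∀ (σ : Cfg L) (h : σ ∉ SB L bb),
      (∑ b : {σ' : Cfg L // σ' ∉ SB L bb},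
          NormedSpace.exp (t • Ksub L q (SB L bb)) ⟨σ, h⟩ b) =
        Real.exp (-((L : ℝ) * t)) *
          ∑' n : ℕ, ((n.factorial : ℝ)⁻¹ * t ^ n) *
            extF L bb ((NN L q bb ^ n).mulVec fun _ => 1) σ ∧
      Summable (fun n : ℕ => ((n.factorial : ℝ)⁻¹ * t ^ n) *
        extF L bb ((NN L q bb ^ n).mulVec fun _ => 1) σ) := by
    intro σ h
    let f : Matrix {σ' : Cfg L // σ' ∉ SB L bb} {σ' : Cfg L // σ' ∉ SB L bb} ℝ →ₗ[ℝ] ℝ :=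
      { toFun := fun M => ∑ b : {σ' : Cfg L // σ' ∉ SB L bb}, M ⟨σ, h⟩ b,
        map_add' := fun M N => by
          show (∑ b : {σ' : Cfg L // σ' ∉ SB L bb}, (M + N) ⟨σ, h⟩ b) = _
          simp [Matrix.add_apply, Finset.sum_add_distrib]
        map_smul' := fun c M => by
          show (∑ b : {σ' : Cfg L // σ' ∉ SB L bb}, (c • M) ⟨σ, h⟩ b) = _
          simp [Matrix.smul_apply, Finset.mul_sum] }
    have hfapp : ∀ n : ℕ, f (NN L q bb ^ n) =
        extF L bb ((NN L q bb ^ n).mulVec fun _ => 1) σ := by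
      intro n
      show (∑ b : {σ' : Cfg L // σ' ∉ SB L bb}, (NN L q bb ^ n) ⟨σ, h⟩ b) =
        (if h' : σ ∈ SB L bb then 0 else ((NN L q bb ^ n).mulVec fun _ => 1) ⟨σ, h'⟩)
      rw [dif_neg h]
      simp [Matrix.mulVec, dotProduct]
    obtain ⟨h1, h2⟩ := exp_NN_entry L q bb t f
    constructor
    · have h3 : (∑ b : {σ' : Cfg L // σ' ∉ SB L bb},
          NormedSpace.exp (t • Ksub L q (SB L bb)) ⟨σ, h⟩ b) =
          Real.exp (-((L : ℝ) * t)) * f (NormedSpace.exp (t • NN L q bb)) := by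
        rw [exp_split L q bb t]
        show (∑ b : {σ' : Cfg L // σ' ∉ SB L bb},
          (Real.exp (-((L : ℝ) * t)) • NormedSpace.exp (t • NN L q bb)) ⟨σ, h⟩ b) = _
        simp only [Matrix.smul_apply, smul_eq_mul]
        rw [← Finset.mul_sum]
        rfl
      rw [h3, h1]
      congr 1
      exact tsum_congr fun n => by rw [hfapp n]
    · have h4 : (fun n : ℕ => ((n.factorial : ℝ)⁻¹ * t ^ n) * f (NN L q bb ^ n)) =
          fun n : ℕ => ((n.factorial : ℝ)⁻¹ * t ^ n) *
            extF L bb ((NN L q bb ^ n).mulVec fun _ => 1) σ := by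
        funext n
        rw [hfapp n]
      rwa [h4] at h2
  have hsummAll : ∀ σ : Cfg L, Summable (fun n : ℕ => ((n.factorial : ℝ)⁻¹ * t ^ n) *
      extF L bb ((NN L q bb ^ n).mulVec fun _ => 1) σ) := by
    intro σ
    by_cases h : σ ∈ SB L bb
    · have h5 : (fun n : ℕ => ((n.factorial : ℝ)⁻¹ * t ^ n) *
          extF L bb ((NN L q bb ^ n).mulVec fun _ => 1) σ) = fun _ => (0 : ℝ) := by
        funext n
        rw [hext0 σ h n, mul_zero]
      rw [h5]
      exact summable_zero
    · exact (hrow σ h).2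
  have hGfun : ∀ σ : Cfg L,
      (if h : σ ∈ SB L bb then (0:ℝ) else
        ∑ b : {σ' : Cfg L // σ' ∉ SB L bb},
          NormedSpace.exp (t • Ksub L q (SB L bb)) ⟨σ, h⟩ b) =
      Real.exp (-((L : ℝ) * t)) *
        ∑' n : ℕ, ((n.factorial : ℝ)⁻¹ * t ^ n) *
          extF L bb ((NN L q bb ^ n).mulVec fun _ => 1) σ := by
    intro σ
    by_cases h : σ ∈ SB L bb
    · rw [dif_pos h]
      rw [tsum_congr (fun n => by rw [hext0 σ h n, mul_zero]), tsum_zero, mul_zero]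
    · rw [dif_neg h]
      exact (hrow σ h).1
  have hGeq : (fun σ : Cfg L => if h : σ ∈ SB L bb then (0:ℝ) else
      ∑ b : {σ' : Cfg L // σ' ∉ SB L bb},
        NormedSpace.exp (t • Ksub L q (SB L bb)) ⟨σ, h⟩ b) =
      fun σ : Cfg L => Real.exp (-((L : ℝ) * t)) *
        ∑' n : ℕ, ((n.factorial : ℝ)⁻¹ * t ^ n) *
          extF L bb ((NN L q bb ^ n).mulVec fun _ => 1) σ := funext hGfun
  rw [hGeq]
  have hterm_nonneg : ∀ (σ : Cfg L) (n : ℕ),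
      0 ≤ ((n.factorial : ℝ)⁻¹ * t ^ n) *
        extF L bb ((NN L q bb ^ n).mulVec fun _ => 1) σ := by
    intro σ n
    apply mul_nonneg (mul_nonneg (by positivity) (pow_nonneg ht n))
    exact (coneD_pow L bb hL hq0 hq1 n).1 σ
  refine ⟨?_, ?_, ?_⟩
  · intro σ
    exact mul_nonneg (Real.exp_pos _).le (tsum_nonneg fun n => hterm_nonneg σ n)
  · intro σ h
    beta_reduce
    rw [tsum_congr (fun n => by rw [hext0 σ h n, mul_zero]), tsum_zero, mul_zero]
  · intro σ k hk1 hσk htr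
    beta_reduce
    apply mul_le_mul_of_nonneg_left ?_ (Real.exp_pos _).le
    apply Summable.tsum_le_tsum ?_ (hsummAll σ) (hsummAll (Function.update σ k true))
    intro n
    apply mul_le_mul_of_nonneg_left ?_ (mul_nonneg (by positivity) (pow_nonneg ht n))
    exact (coneD_pow L bb hL hq0 hq1 n).2.2 σ k hk1 hσk htr

lemma surv_eq_row (L : ℕ) (q : ℝ) (bb : Bool) (η : Cfg L) (hη : η ∉ SB L bb) (t : ℝ) :
    letI : Fintype {σ : Cfg L // σ ∉ SB L bb} := Fintype.ofFinite _
    surv L q (SB L bb) η t =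
      ∑ b : {σ' : Cfg L // σ' ∉ SB L bb},
        NormedSpace.exp (t • Ksub L q (SB L bb)) ⟨η, hη⟩ b := by
  letI : Fintype {σ : Cfg L // σ ∉ SB L bb} := Fintype.ofFinite _
  show (∑ a : {σ' : Cfg L // σ' ∉ SB L bb}, ∑ b : {σ' : Cfg L // σ' ∉ SB L bb},
      (if a.1 = η then NormedSpace.exp (t • Ksub L q (SB L bb)) a b else 0)) = _
  have h1 : ∀ a : {σ' : Cfg L // σ' ∉ SB L bb},
      (∑ b : {σ' : Cfg L // σ' ∉ SB L bb},
        (if a.1 = η then NormedSpace.exp (t • Ksub L q (SB L bb)) a b else 0)) =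
      (if a = ⟨η, hη⟩ then
        (∑ b : {σ' : Cfg L // σ' ∉ SB L bb},
          NormedSpace.exp (t • Ksub L q (SB L bb)) ⟨η, hη⟩ b) else 0) := by
    intro a
    by_cases h : a = (⟨η, hη⟩ : {σ' : Cfg L // σ' ∉ SB L bb})
    · rw [if_pos h]
      apply Finset.sum_congr rfl
      intro b _
      rw [if_pos (by rw [h]), h]
    · rw [if_neg h]
      have h2 : ¬ (a.1 = η) := fun hh => h (Subtype.ext hh)
      apply Finset.sum_eq_zero
      intro b _
      rw [if_neg h2]
  rw [Finset.sum_congr rfl fun a _ => h1 a,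
    Finset.sum_ite_eq' Finset.univ (⟨η, hη⟩ : {σ' : Cfg L // σ' ∉ SB L bb})]
  simp

lemma key_submult (L : ℕ) (hL : 1 ≤ L) {q : ℝ} (hq0 : 0 ≤ q) (hq1 : q ≤ 1) (bb : Bool)
    (s t : ℝ) (hs : 0 ≤ s) (ht : 0 ≤ t) :
    surv L q (SB L bb) (etaC L bb) (t + s) ≤
      surv L q (SB L bb) (etaC L bb) t * surv L q (SB L bb) (etaC L bb) s := by
  letI : Fintype {σ : Cfg L // σ ∉ SB L bb} := Fintype.ofFinite _
  have hη : etaC L bb ∉ SB L bb := etaC_not_mem hL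
  have hsg : NormedSpace.exp ((t + s) • Ksub L q (SB L bb)) =
      NormedSpace.exp (t • Ksub L q (SB L bb)) *
        NormedSpace.exp (s • Ksub L q (SB L bb)) := by
    rw [add_smul]
    exact Matrix.exp_add_of_commute _ _
      (((Commute.refl (Ksub L q (SB L bb))).smul_left t).smul_right s)
  rw [surv_eq_row L q bb _ hη (t + s), surv_eq_row L q bb _ hη t,
    surv_eq_row L q bb _ hη s, hsg]
  have hexpand : (∑ b : {σ' : Cfg L // σ' ∉ SB L bb},
      (NormedSpace.exp (t • Ksub L q (SB L bb)) *
        NormedSpace.exp (s • Ksub L q (SB L bb))) ⟨etaC L bb, hη⟩ b) =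
      ∑ c : {σ' : Cfg L // σ' ∉ SB L bb},
        NormedSpace.exp (t • Ksub L q (SB L bb)) ⟨etaC L bb, hη⟩ c *
          (∑ b : {σ' : Cfg L // σ' ∉ SB L bb},
            NormedSpace.exp (s • Ksub L q (SB L bb)) c b) := by
    rw [Finset.sum_congr rfl fun b _ => Matrix.mul_apply, Finset.sum_comm]
    apply Finset.sum_congr rfl
    intro c _
    rw [Finset.mul_sum]
  rw [hexpand]
  have hcone := coneD_exp_row L bb hL hq0 hq1 s hs
  have hmax : ∀ c : {σ' : Cfg L // σ' ∉ SB L bb},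
      (∑ b : {σ' : Cfg L // σ' ∉ SB L bb},
        NormedSpace.exp (s • Ksub L q (SB L bb)) c b) ≤
      ∑ b : {σ' : Cfg L // σ' ∉ SB L bb},
        NormedSpace.exp (s • Ksub L q (SB L bb)) ⟨etaC L bb, hη⟩ b := by
    intro c
    have h1 := coneD_le_eta hL hcone c.1
    beta_reduce at h1
    rw [dif_neg c.2, dif_neg hη] at h1
    exact h1
  have hnn := exp_Ksub_entry_nonneg L bb hq0 hq1 t ht
  calc (∑ c : {σ' : Cfg L // σ' ∉ SB L bb},
        NormedSpace.exp (t • Ksub L q (SB L bb)) ⟨etaC L bb, hη⟩ c *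
          (∑ b : {σ' : Cfg L // σ' ∉ SB L bb},
            NormedSpace.exp (s • Ksub L q (SB L bb)) c b))
      ≤ ∑ c : {σ' : Cfg L // σ' ∉ SB L bb},
          NormedSpace.exp (t • Ksub L q (SB L bb)) ⟨etaC L bb, hη⟩ c *
            (∑ b : {σ' : Cfg L // σ' ∉ SB L bb},
              NormedSpace.exp (s • Ksub L q (SB L bb)) ⟨etaC L bb, hη⟩ b) :=
        Finset.sum_le_sum fun c _ =>
          mul_le_mul_of_nonneg_left (hmax c) (hnn ⟨etaC L bb, hη⟩ c)
    _ = _ := by rw [← Finset.sum_mul]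

/-- sub-multiplicativity of the survival functions.
For the East model on `{1,…,L}`: for all `s,t ≥ 0`,
`P_{𝟙0}(τ_L > t+s) ≤ P_{𝟙0}(τ_L > t)·P_{𝟙0}(τ_L > s)` and
`P_𝟙(τ̂_L > t+s) ≤ P_𝟙(τ̂_L > t)·P_𝟙(τ̂_L > s)`. -/
theorem survival_submultiplicative
    (L : ℕ) (hL : 1 ≤ L) (q : ℝ) (hq0 : 0 < q) (hq : q < 1 / 2) :
    (∀ s t : ℝ, 0 ≤ s → 0 ≤ t →
      surv L q (lastOneSet L) (oneZero L) (t + s) ≤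
        surv L q (lastOneSet L) (oneZero L) t *
          surv L q (lastOneSet L) (oneZero L) s) ∧
    (∀ s t : ℝ, 0 ≤ s → 0 ≤ t →
      surv L q (lastZeroSet L) (allOnes L) (t + s) ≤
        surv L q (lastZeroSet L) (allOnes L) t *
          surv L q (lastZeroSet L) (allOnes L) s) := by
  have hq1 : q ≤ 1 := by linarith
  have hq0' : 0 ≤ q := le_of_lt hq0
  constructor
  · intro s t hs ht
    have h1 : lastOneSet L = SB L true := rfl
    have h2 : oneZero L = etaC L true := by
      funext x
      show decide (x.val + 1 ≠ L) = if x.val + 1 = L then !true else true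
      by_cases h : x.val + 1 = L
      · rw [if_pos h]; simp [h]
      · rw [if_neg h]; simp [h]
    rw [h1, h2]
    exact key_submult L hL hq0' hq1 true s t hs ht
  · intro s t hs ht
    have h1 : lastZeroSet L = SB L false := rfl
    have h2 : allOnes L = etaC L false := by
      funext x
      show true = if x.val + 1 = L then !false else true
      split_ifs <;> rfl
    rw [h1, h2]
    exact key_submult L hL hq0' hq1 false s t hs ht

end

end East
end

section
/- Let τ be a positive random variable on a probability space such that the map t ↦ P(τ ≥ t) is continuous and the tail function is sub-multiplicative, i.e. P(τ > t+s) ≤ P(τ > t)·P(τ > s) for all s,t ≥ 0. Then for every t > 0 one has P(τ < t)·E[τ] ≤ e·t, as an inequality in [0,∞] (E[τ] may be infinite; in that case P(τ < t) = 0). -/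
open Filter Topology MeasureTheory

namespace East

noncomputable section

/-- tail estimate for sub-multiplicative survival functions.
If `τ > 0` is a random variable on a probability space with `t ↦ P(τ ≥ t)` continuous and
`P(τ > t+s) ≤ P(τ > t)·P(τ > s)` for all `s,t ≥ 0`, then for every `t > 0`,
`P(τ < t)·E[τ] ≤ e·t` (as an inequality in `[0,∞]`). -/
theorem submultiplicative_tail_bound
    {Ω : Type*} [MeasurableSpace Ω] (P : Measure Ω) [IsProbabilityMeasure P]
    (τ : Ω → ℝ) (hmeas : Measurable τ) (hpos : ∀ ω, 0 < τ ω)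
    (hcont : Continuous fun t : ℝ => (P {ω | t ≤ τ ω}).toReal)
    (hsub : ∀ s t : ℝ, 0 ≤ s → 0 ≤ t →
      P {ω | t + s < τ ω} ≤ P {ω | t < τ ω} * P {ω | s < τ ω}) :
    ∀ t : ℝ, 0 < t →
      P {ω | τ ω < t} * ∫⁻ ω, ENNReal.ofReal (τ ω) ∂P ≤
        ENNReal.ofReal (Real.exp 1 * t) := by
  intro t ht
  set g : ENNReal := P {ω | t < τ ω} with hgdef
  have hms : ∀ s : ℝ, MeasurableSet {ω | s < τ ω} := fun s =>
    measurableSet_lt measurable_const hmeas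
  have hlt : MeasurableSet {ω | τ ω < t} := measurableSet_lt hmeas measurable_const
  by_cases h0 : P {ω | τ ω < t} = 0
  · simp [h0]
  · -- complement identity
    have hcompl : {ω | τ ω < t}ᶜ = {ω | t ≤ τ ω} := by ext ω; simp [not_lt]
    have hsum : P {ω | τ ω < t} + P {ω | t ≤ τ ω} = 1 := by
      rw [← hcompl]; exact prob_add_prob_compl hlt
    -- g < 1
    have hgle : g ≤ P {ω | t ≤ τ ω} := by
      apply measure_mono
      intro ω hω
      simp only [Set.mem_setOf_eq] at hω ⊢
      exact le_of_lt hω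
    have hle1 : P {ω | t ≤ τ ω} < 1 := by
      rcases lt_or_eq_of_le (prob_le_one : P {ω | t ≤ τ ω} ≤ 1) with h | h
      · exact h
      · exfalso
        rw [h] at hsum
        have h2 : P {ω | τ ω < t} + 1 = 0 + 1 := by rw [hsum, zero_add]
        exact h0 ((ENNReal.add_left_inj ENNReal.one_ne_top).mp h2)
    have hglt : g < 1 := lt_of_le_of_lt hgle hle1
    have h1g_ne : (1 : ENNReal) - g ≠ 0 := by
      simp only [ne_eq, tsub_eq_zero_iff_le, not_le]; exact hglt
    have h1g_top : (1 : ENNReal) - g ≠ ⊤ := by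
      exact ne_top_of_le_ne_top ENNReal.one_ne_top tsub_le_self
    -- P(τ < t) ≤ 1 - g
    have hPle : P {ω | τ ω < t} ≤ 1 - g := by
      apply ENNReal.le_sub_of_add_le_right (measure_ne_top P _)
      calc P {ω | τ ω < t} + g ≤ P {ω | τ ω < t} + P {ω | t ≤ τ ω} :=
            add_le_add_right hgle _
        _ = 1 := hsum
    -- geometric tail bound
    have hgeom : ∀ n : ℕ, P {ω | (n : ℝ) * t < τ ω} ≤ g ^ n := by
      intro n
      induction n with
      | zero => simpa using prob_le_one
      | succ n ih =>
          have hstep : P {ω | (n : ℝ) * t + t < τ ω} ≤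
              P {ω | (n : ℝ) * t < τ ω} * P {ω | t < τ ω} :=
            hsub t ((n : ℝ) * t) (le_of_lt ht) (by positivity)
          have heq : ((n : ℝ) + 1) * t = (n : ℝ) * t + t := by ring
          calc P {ω | ((n + 1 : ℕ) : ℝ) * t < τ ω}
              = P {ω | (n : ℝ) * t + t < τ ω} := by
                congr 1; ext ω; simp only [Set.mem_setOf_eq]; push_cast; rw [heq]
            _ ≤ P {ω | (n : ℝ) * t < τ ω} * g := hstep
            _ ≤ g ^ n * g := mul_le_mul_left ih g
            _ = g ^ (n + 1) := (pow_succ g n).symm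
    -- pointwise layercake bound
    have hpt : ∀ ω, ENNReal.ofReal (τ ω) ≤
        ∑' n : ℕ, Set.indicator {ω' | (n : ℝ) * t < τ ω'}
          (fun _ => ENNReal.ofReal t) ω := by
      intro ω
      set N : ℕ := ⌈τ ω / t⌉₊ with hN
      have hfin : ∀ n ∈ Finset.range N,
          Set.indicator {ω' | (n : ℝ) * t < τ ω'} (fun _ => ENNReal.ofReal t) ω
            = ENNReal.ofReal t := by
        intro n hn
        have hn' : (n : ℝ) < τ ω / t := by
          rw [← Nat.lt_ceil]; exact Finset.mem_range.mp hn
        have : (n : ℝ) * t < τ ω := by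
          rwa [lt_div_iff₀ ht] at hn'
        simp [Set.indicator_of_mem, this]
      calc ENNReal.ofReal (τ ω) ≤ ENNReal.ofReal ((N : ℝ) * t) := by
            apply ENNReal.ofReal_le_ofReal
            have : τ ω / t ≤ (N : ℝ) := Nat.le_ceil _
            rwa [div_le_iff₀ ht] at this
        _ = ∑ n ∈ Finset.range N, ENNReal.ofReal t := by
            rw [Finset.sum_const, Finset.card_range, ENNReal.ofReal_mul (by positivity),
              ENNReal.ofReal_natCast, nsmul_eq_mul]
        _ = ∑ n ∈ Finset.range N,
              Set.indicator {ω' | (n : ℝ) * t < τ ω'} (fun _ => ENNReal.ofReal t) ω := by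
            exact (Finset.sum_congr rfl hfin).symm
        _ ≤ _ := ENNReal.sum_le_tsum _
    -- bound the expectation
    have hE : ∫⁻ ω, ENNReal.ofReal (τ ω) ∂P ≤ ENNReal.ofReal t * (1 - g)⁻¹ := by
      calc ∫⁻ ω, ENNReal.ofReal (τ ω) ∂P
          ≤ ∫⁻ ω, ∑' n : ℕ, Set.indicator {ω' | (n : ℝ) * t < τ ω'}
              (fun _ => ENNReal.ofReal t) ω ∂P := lintegral_mono hpt
        _ = ∑' n : ℕ, ∫⁻ ω, Set.indicator {ω' | (n : ℝ) * t < τ ω'}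
              (fun _ => ENNReal.ofReal t) ω ∂P := by
            rw [lintegral_tsum]
            intro n
            exact (measurable_const.indicator (hms _)).aemeasurable
        _ = ∑' n : ℕ, ENNReal.ofReal t * P {ω | (n : ℝ) * t < τ ω} := by
            congr 1; ext n
            rw [lintegral_indicator_const (hms _)]
        _ ≤ ∑' n : ℕ, ENNReal.ofReal t * g ^ n := by
            exact ENNReal.tsum_le_tsum fun n => mul_le_mul_right (hgeom n) _
        _ = ENNReal.ofReal t * (1 - g)⁻¹ := by
            rw [ENNReal.tsum_mul_left, ENNReal.tsum_geometric]
    -- combine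
    calc P {ω | τ ω < t} * ∫⁻ ω, ENNReal.ofReal (τ ω) ∂P
        ≤ (1 - g) * (ENNReal.ofReal t * (1 - g)⁻¹) := mul_le_mul' hPle hE
      _ = ENNReal.ofReal t * ((1 - g) * (1 - g)⁻¹) := by ring
      _ = ENNReal.ofReal t := by
          rw [ENNReal.mul_inv_cancel h1g_ne h1g_top, mul_one]
      _ ≤ ENNReal.ofReal (Real.exp 1 * t) := by
          apply ENNReal.ofReal_le_ofReal
          nlinarith [Real.add_one_le_exp (1 : ℝ), ht.le]

end

end East
end

section
/- Fix an integer r > 2 and define the integer sequence ℓ₁ = 3 and ℓ_i = 2ℓ_{i−1} − ⌈ℓ_{i−1}/r⌉ for 2 ≤ i ≤ r. Then for all i with 1 ≤ i ≤ r: 2^i·(1 − 1/r)^i ≤ ℓ_i ≤ 2^{i+1}. -/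
open Filter Topology MeasureTheory

namespace East

noncomputable section

/-- growth of the bisection length scales.
With `ℓ₁ = 3` and `ℓ_i = 2ℓ_{i−1} − ⌈ℓ_{i−1}/r⌉` for `2 ≤ i ≤ r` (where `r > 2`), one has
`2^i (1 − 1/r)^i ≤ ℓ_i ≤ 2^{i+1}` for all `1 ≤ i ≤ r`. -/
theorem bisection_length_bounds
    (r : ℕ) (hr : 2 < r) (ℓ : ℕ → ℕ) (hℓ1 : ℓ 1 = 3)
    (hrec : ∀ i : ℕ, 2 ≤ i → i ≤ r →
      ℓ i = 2 * ℓ (i - 1) - ⌈(ℓ (i - 1) : ℝ) / (r : ℝ)⌉₊) :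
    ∀ i : ℕ, 1 ≤ i → i ≤ r →
      (2 : ℝ) ^ i * (1 - 1 / (r : ℝ)) ^ i ≤ (ℓ i : ℝ) ∧ (ℓ i : ℝ) ≤ 2 ^ (i + 1) := by
  have hr3 : (3 : ℝ) ≤ (r : ℝ) := by exact_mod_cast hr
  have hrpos : (0 : ℝ) < (r : ℝ) := by linarith
  have key : ∀ i : ℕ, 1 ≤ i → i ≤ r →
      ((2 * (1 - 1 / (r : ℝ))) ^ i + 1 ≤ (ℓ i : ℝ) ∧ (ℓ i : ℝ) ≤ 2 ^ (i + 1)) := by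
    intro i h1
    induction i, h1 using Nat.le_induction with
    | base =>
      intro _
      rw [hℓ1, pow_one]
      constructor
      · have : 0 < 1 / (r : ℝ) := by positivity
        push_cast; nlinarith
      · norm_num
    | succ n hn ih =>
      intro hle
      obtain ⟨ih1, ih2⟩ := ih (by omega)
      have hrec' := hrec (n + 1) (by omega) hle
      simp only [Nat.add_sub_cancel] at hrec'
      set c : ℕ := ⌈(ℓ n : ℝ) / (r : ℝ)⌉₊ with hc
      have hdivnn : 0 ≤ (ℓ n : ℝ) / (r : ℝ) := by positivity
      have hc1 : (c : ℝ) < (ℓ n : ℝ) / (r : ℝ) + 1 := Nat.ceil_lt_add_one hdivnn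
      have hcle : c ≤ ℓ n := by
        rw [hc, Nat.ceil_le]
        exact div_le_self (Nat.cast_nonneg _) (by linarith)
      have hcast : (ℓ (n + 1) : ℝ) = 2 * (ℓ n : ℝ) - (c : ℝ) := by
        rw [hrec']
        have : c ≤ 2 * ℓ n := by omega
        push_cast [Nat.cast_sub this]
        ring
      have hinv : 0 < 1 / (r : ℝ) := by positivity
      have hinv3 : 1 / (r : ℝ) ≤ 1 / 3 := by
        apply one_div_le_one_div_of_le <;> linarith
      have ha1 : (1 : ℝ) ≤ (2 * (1 - 1 / (r : ℝ))) ^ n := by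
        apply one_le_pow₀
        linarith
      constructor
      · rw [hcast, pow_succ']
        have hlr : (ℓ n : ℝ) / (r : ℝ) = (ℓ n : ℝ) * (1 / r) := by ring
        rw [hlr] at hc1
        nlinarith [mul_le_mul_of_nonneg_left ih1 (by linarith : (0:ℝ) ≤ 2 - 1 / (r:ℝ))]
      · rw [hcast]
        have hcnn : (0 : ℝ) ≤ (c : ℝ) := Nat.cast_nonneg c
        calc 2 * (ℓ n : ℝ) - c ≤ 2 * (ℓ n : ℝ) := by linarith
          _ ≤ 2 * 2 ^ (n + 1) := by linarith
          _ = 2 ^ (n + 1 + 1) := by ring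
  intro i h1 h2
  obtain ⟨k1, k2⟩ := key i h1 h2
  refine ⟨?_, k2⟩
  rw [← mul_pow]
  linarith

end

end East
end
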